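/- Let H be a finite class of classifiers h : X × {±1} → {0,1}, let D_E be a probability distribution on X × {±1} × {±1} with P_{D_E}(a = j, y = −1) > 0 for both j ∈ {±1}, and let err : Δ(H) → [0,1] be the linear functional err(π) = E_{h∼π}[ Σ_{j=1}^n w_j · 1{h(X_j) ≠ Y_j} ] for fixed examples (X_j, Y_j) and nonnegative weights w_j with Σ_j w_j = 1. Assume H contains the two classifiers 1[a = +1] and 1[a = −1] (the classifier 1[a = j] predicts 1 exactly when the group attribute equals j, so FPR_j(1[a=j], D_E) = 1 and FPR_{−j}(1[a=j], D_E) = 0). Fix γ ≥ 0 and ν ≥ 0, and define the Lagrangian L(π, λ) = err(π) + λ_{+1}(FPR_{+1}(π,D_E) − FPR_{−1}(π,D_E) − γ) + λ_{−1}(FPR_{−1}(π,D_E) − FPR_{+1}(π,D_E) − γ) for π ∈ Δ(H) and λ in the restricted dual set Λ = {λ ∈ ℝ²_{≥0} : λ_{+1} + λ_{−1} ≤ 2}. Suppose (π̂, λ̂) ∈ Δ(H) × Λ is a ν-approximate saddle point, meaning L(π̂, λ̂) ≤ L(π, λ̂) + ν for all π ∈ Δ(H) and L(π̂, λ̂)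 ≥ L(π̂, λ) − ν for all λ ∈ Λ. Then err(π̂) ≤ OPT + 2ν, and FPR_j(π̂, D_E) − FPR_{−j}(π̂, D_E) ≤ γ + 2ν for both j ∈ {±1}, where OPT = min{ err(π) : π ∈ Δ(H), |FPR_{+1}(π,D_E) − FPR_{−1}(π,D_E)| ≤ γ }. -/
import Mathlib


open MeasureTheory

/-- guarantee of a ν-approximate saddle point of the restricted
Lagrangian for fair cost-sensitive (weighted) classification.  Classifiers output
`Bool` with `true` = 1 (positive prediction); groups `j` and labels are `Bool`
(`true` = +1, `false` = −1 for `y`). -/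
theorem approx_saddle_point_guarantee {X : Type*} [MeasurableSpace X]
    {H : Type*} [Fintype H] (hyp : H → X × Bool → Bool)
    (DE : Measure (X × Bool × Bool)) [IsProbabilityMeasure DE]
    (hpos : ∀ j : Bool, 0 < DE {p | p.2.1 = j ∧ p.2.2 = false})
    -- H contains the classifiers 1[a = +1] and 1[a = −1]
    (hplus : ∃ k : H, hyp k = fun p => p.2)
    (hminus : ∃ k : H, hyp k = fun p => !p.2)
    -- the weighted classification objective
    (n : ℕ) (Xs : Fin n → X × Bool) (Ys : Fin n → Bool) (w : Fin n → ℝ)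
    (hw : ∀ j, 0 ≤ w j) (hw1 : (∑ j, w j) = 1)
    (err : (H → ℝ) → ℝ)
    (herr : ∀ π, err π =
      ∑ h, π h * ∑ j, w j * (if hyp h (Xs j) ≠ Ys j then (1 : ℝ) else 0))
    -- false positive rates
    (FPR : Bool → (H → ℝ) → ℝ)
    (hFPR : ∀ j π, FPR j π = ∑ h, π h *
      ((DE {p | hyp h (p.1, p.2.1) = true ∧ p.2.1 = j ∧ p.2.2 = false}).toReal /
        (DE {p | p.2.1 = j ∧ p.2.2 = false}).toReal))
    (γ ν : ℝ) (hγ : 0 ≤ γ) (hν : 0 ≤ ν)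
    -- the Lagrangian on Δ(H) × Λ
    (L : (H → ℝ) → (Bool → ℝ) → ℝ)
    (hL : ∀ π lam, L π lam = err π
      + lam true * (FPR true π - FPR false π - γ)
      + lam false * (FPR false π - FPR true π - γ))
    -- (π̂, λ̂) is a ν-approximate saddle point over Δ(H) × Λ
    (πhat : H → ℝ) (hπhat : (∀ h, 0 ≤ πhat h) ∧ (∑ h, πhat h) = 1)
    (lamhat : Bool → ℝ)
    (hlamhat : (∀ j, 0 ≤ lamhat j) ∧ lamhat true + lamhat false ≤ 2)
    (hsaddle1 : ∀ π : H → ℝ, ((∀ h, 0 ≤ π h) ∧ (∑ h, π h) = 1) →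
      L πhat lamhat ≤ L π lamhat + ν)
    (hsaddle2 : ∀ lam : Bool → ℝ,
      ((∀ j, 0 ≤ lam j) ∧ lam true + lam false ≤ 2) →
      L πhat lam - ν ≤ L πhat lamhat) :
    -- err(π̂) ≤ OPT + 2ν, and near-feasibility of π̂
    (∀ π : H → ℝ, ((∀ h, 0 ≤ π h) ∧ (∑ h, π h) = 1 ∧
        |FPR true π - FPR false π| ≤ γ) →
      err πhat ≤ err π + 2 * ν) ∧
    (∀ j : Bool, FPR j πhat - FPR (!j) πhat ≤ γ + 2 * ν) := by
  classical
  obtain ⟨hπ0, hπ1⟩ := hπhat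
  obtain ⟨hq0, hq2⟩ := hlamhat
  have herrnn : ∀ π : H → ℝ, (∀ h, 0 ≤ π h) → 0 ≤ err π := by
    intro π h0
    rw [herr]
    refine Finset.sum_nonneg fun h _ => mul_nonneg (h0 h) ?_
    refine Finset.sum_nonneg fun i _ => mul_nonneg (hw i) ?_
    split <;> norm_num
  have hdelta : ∀ (k : H) (f : H → ℝ),
      (∑ h, (if h = k then (1:ℝ) else 0) * f h) = f k := by
    intro k f
    rw [Finset.sum_eq_single k]
    · simp
    · intro b _ hb; simp [hb]
    · intro hb; simp at hb
  have hdmem : ∀ k : H, (∀ h, 0 ≤ (fun h => if h = k then (1:ℝ) else 0) h) ∧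
      (∑ h, (if h = k then (1:ℝ) else 0)) = 1 := by
    intro k
    refine ⟨fun h => ?_, by simp⟩
    dsimp only
    split <;> norm_num
  have herrle : ∀ k : H, err (fun h => if h = k then (1:ℝ) else 0) ≤ 1 := by
    intro k
    rw [herr]
    calc (∑ h, (if h = k then (1:ℝ) else 0) *
          ∑ j, w j * (if hyp h (Xs j) ≠ Ys j then (1 : ℝ) else 0))
        = ∑ j, w j * (if hyp k (Xs j) ≠ Ys j then (1 : ℝ) else 0) := hdelta k _
      _ ≤ ∑ j, w j := Finset.sum_le_sum (fun i _ => by split <;> simp [hw i])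
      _ = 1 := hw1
  have h1 : 0 ≤ err πhat := herrnn πhat hπ0
  constructor
  · rintro π ⟨hp0, hp1, hfeas⟩
    have hz := hsaddle2 (fun _ => 0) ⟨fun j => le_refl 0, by norm_num⟩
    have hs := hsaddle1 π ⟨hp0, hp1⟩
    simp only [hL] at hz hs
    rw [abs_le] at hfeas
    nlinarith [mul_nonneg (hq0 true)
        (show (0:ℝ) ≤ γ - (FPR true π - FPR false π) by linarith [hfeas.2]),
      mul_nonneg (hq0 false)
        (show (0:ℝ) ≤ γ + (FPR true π - FPR false π) by linarith [hfeas.1])]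
  · intro j
    cases j
    · -- j = false
      by_contra hcon
      push_neg at hcon
      simp only [Bool.not_false] at hcon
      obtain ⟨k, hk⟩ := hplus
      have hF0 : FPR false (fun h => if h = k then (1:ℝ) else 0) = 0 := by
        rw [hFPR, hdelta]
        have hset : {p : X × Bool × Bool |
            hyp k (p.1, p.2.1) = true ∧ p.2.1 = false ∧ p.2.2 = false} = ∅ := by
          ext p; simp only [Set.mem_setOf_eq, Set.mem_empty_iff_false, iff_false, hk]
          rintro ⟨h1, h2, h3⟩; rw [h1] at h2; simp at h2
        rw [hset]
        simp
      have hF1 : FPR true (fun h => if h = k then (1:ℝ) else 0) = 1 := by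
        rw [hFPR, hdelta]
        have hset : {p : X × Bool × Bool |
            hyp k (p.1, p.2.1) = true ∧ p.2.1 = true ∧ p.2.2 = false}
            = {p : X × Bool × Bool | p.2.1 = true ∧ p.2.2 = false} := by
          ext p; simp [hk]
        rw [hset, div_self]
        exact (ENNReal.toReal_ne_zero).mpr ⟨(hpos true).ne', measure_ne_top _ _⟩
      have hA := hsaddle1 _ (hdmem k)
      have hB := hsaddle2 (fun b => if b then (0:ℝ) else 2)
        ⟨fun b => by cases b <;> norm_num, by norm_num⟩
      simp only [hL] at hA hB
      rw [hF0, hF1] at hA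
      norm_num at hB
      have h2 := herrle k
      have hvpos : (0:ℝ) < FPR false πhat - FPR true πhat - γ := by linarith
      have hI : ν - (2 - lamhat false + lamhat true) *
          (FPR false πhat - FPR true πhat - γ) ≥ 0 := by
        nlinarith [mul_nonneg (hq0 true) hγ]
      have hII : 1 - lamhat false + lamhat true + 2*ν
          - 2*(FPR false πhat - FPR true πhat - γ) ≥ 0 := by
        nlinarith [mul_nonneg (hq0 true) hγ, mul_nonneg (hq0 false) hγ]
      nlinarith [hI, hII, hcon, hvpos]
    · -- j = true
      by_contra hcon
      push_neg at hcon
      simp only [Bool.not_true] at hcon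
      obtain ⟨k, hk⟩ := hminus
      have hF0 : FPR true (fun h => if h = k then (1:ℝ) else 0) = 0 := by
        rw [hFPR, hdelta]
        have hset : {p : X × Bool × Bool |
            hyp k (p.1, p.2.1) = true ∧ p.2.1 = true ∧ p.2.2 = false} = ∅ := by
          ext p; simp only [Set.mem_setOf_eq, Set.mem_empty_iff_false, iff_false, hk]
          rintro ⟨h1, h2, h3⟩; rw [h2] at h1; simp at h1
        rw [hset]
        simp
      have hF1 : FPR false (fun h => if h = k then (1:ℝ) else 0) = 1 := by
        rw [hFPR, hdelta]
        have hset : {p : X × Bool × Bool |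
            hyp k (p.1, p.2.1) = true ∧ p.2.1 = false ∧ p.2.2 = false}
            = {p : X × Bool × Bool | p.2.1 = false ∧ p.2.2 = false} := by
          ext p; simp [hk]
        rw [hset, div_self]
        exact (ENNReal.toReal_ne_zero).mpr ⟨(hpos false).ne', measure_ne_top _ _⟩
      have hA := hsaddle1 _ (hdmem k)
      have hB := hsaddle2 (fun b => if b then (2:ℝ) else 0)
        ⟨fun b => by cases b <;> norm_num, by norm_num⟩
      simp only [hL] at hA hB
      rw [hF0, hF1] at hA
      norm_num at hB
      have h2 := herrle k
      have hvpos : (0:ℝ) < FPR true πhat - FPR false πhat - γ := by linarith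
      have hI : ν - (2 - lamhat true + lamhat false) *
          (FPR true πhat - FPR false πhat - γ) ≥ 0 := by
        nlinarith [mul_nonneg (hq0 false) hγ]
      have hII : 1 - lamhat true + lamhat false + 2*ν
          - 2*(FPR true πhat - FPR false πhat - γ) ≥ 0 := by
        nlinarith [mul_nonneg (hq0 true) hγ, mul_nonneg (hq0 false) hγ]
      nlinarith [hI, hII, hcon, hvpos]
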